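/- Let X be a finite set, k an integer with 1 ≤ k < |X|, and 𝔠 a nonempty symmetric family of choice functions on k-subsets of X. Let r be an integer with 4 ≤ r ≤ k; assume that for every s with 2 ≤ s < r every s-averaging function for 𝔠 is a monarchy, and that some r-averaging function for 𝔠 is not a monarchy. Then for every k-element subset Y of X and every injective tuple ā = (a₁, …, a_r) ∈ Yʳ there is an r-averaging function f = (f_Z) for 𝔠 such that f_Y(ā) = a₂ and f_Z(b̄) = b₁ for every k-element subset Z of X and every b̄ ∈ Zʳ with a repeated entry. -/

import Mathlib

def IsChoice {X : Type*} (k : ℕ) (c : Finset X → X) : Prop :=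
  ∀ Y : Finset X, Y.card = k → c Y ∈ Y

def SymFam {X : Type*} [DecidableEq X] (C : Set (Finset X → X)) : Prop :=
  ∀ π : Equiv.Perm X, ∀ c ∈ C, (fun Y : Finset X => π.symm (c (Y.image π))) ∈ C

def FullFam {X : Type*} (k : ℕ) (C : Set (Finset X → X)) : Prop :=
  ∀ c : Finset X → X, IsChoice k c → c ∈ C

def IsAvg {X : Type*} (k r : ℕ) (C : Set (Finset X → X))
    (f : Finset X → (Fin r → X) → X) : Prop :=
  (∀ Y : Finset X, Y.card = k → ∀ x : Fin r → X, (∀ i, x i ∈ Y) → ∃ i, f Y x = x i) ∧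
  (∀ c : Fin r → Finset X → X, (∀ i, c i ∈ C) →
    (fun Y : Finset X => f Y fun i => c i Y) ∈ C)

def AvgMonarchy {X : Type*} (k r : ℕ) (f : Finset X → (Fin r → X) → X) : Prop :=
  ∃ t : Fin r, ∀ Y : Finset X, Y.card = k → ∀ x : Fin r → X, (∀ i, x i ∈ Y) → f Y x = x t

lemma exists_perm_extend19 {α : Type*} [Fintype α] [DecidableEq α] {n : ℕ}
    (s t : Finset α) (hst : s.card = t.card) (u v : Fin n → α)
    (hu : Function.Injective u) (hv : Function.Injective v)
    (hus : ∀ i, u i ∈ s) (hvt : ∀ i, v i ∈ t) :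
    ∃ π : Equiv.Perm α, (∀ i, π (u i) = v i) ∧ s.image π = t := by
  classical
  set A1 : Finset α := Finset.image u Finset.univ with hA1
  set A2 : Finset α := Finset.image v Finset.univ with hA2
  have hA1s : A1 ⊆ s := by
    intro x hx; simp only [hA1, Finset.mem_image] at hx; obtain ⟨i, _, rfl⟩ := hx; exact hus i
  have hA2t : A2 ⊆ t := by
    intro x hx; simp only [hA2, Finset.mem_image] at hx; obtain ⟨i, _, rfl⟩ := hx; exact hvt i
  have hcA1 : A1.card = n := by
    rw [hA1, Finset.card_image_of_injective _ hu, Finset.card_univ, Fintype.card_fin]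
  have hcA2 : A2.card = n := by
    rw [hA2, Finset.card_image_of_injective _ hv, Finset.card_univ, Fintype.card_fin]
  have hD : (s \ A1).card = (t \ A2).card := by
    rw [Finset.card_sdiff_of_subset hA1s, Finset.card_sdiff_of_subset hA2t, hcA1, hcA2, hst]
  have hE : (sᶜ).card = (tᶜ).card := by
    rw [Finset.card_compl, Finset.card_compl, hst]
  let d : ((s \ A1 : Finset α) : Type _) ≃ ((t \ A2 : Finset α) : Type _) :=
    Fintype.equivOfCardEq (by simp only [Fintype.card_coe, hD])
  let cpl : ((sᶜ : Finset α) : Type _) ≃ ((tᶜ : Finset α) : Type _) :=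
    Fintype.equivOfCardEq (by simp only [Fintype.card_coe, hE])
  have memA1 : ∀ x, x ∈ A1 ↔ ∃ i, u i = x := by
    intro x; simp [hA1]
  set F : α → α := fun x =>
    if h1 : ∃ i, u i = x then v (Classical.choose h1)
    else if h2 : x ∈ s then
      ((d ⟨x, Finset.mem_sdiff.2 ⟨h2, fun hm => h1 ((memA1 x).1 hm)⟩⟩ : (t \ A2 : Finset α)) : α)
    else ((cpl ⟨x, Finset.mem_compl.2 h2⟩ : (tᶜ : Finset α)) : α) with hF
  -- branch characterizations
  have hFu : ∀ i, F (u i) = v i := by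
    intro i
    have h1 : ∃ j, u j = u i := ⟨i, rfl⟩
    have : Classical.choose h1 = i := hu (Classical.choose_spec h1)
    simp only [hF, dif_pos h1, this]
  have hF_A2 : ∀ x, (∃ i, u i = x) → F x ∈ A2 := by
    intro x h1
    simp only [hF, dif_pos h1]
    simp [hA2]
  have hF_D2 : ∀ x (h2 : x ∈ s), ¬(∃ i, u i = x) → F x ∈ t \ A2 := by
    intro x h2 h1
    simp only [hF, dif_neg h1, dif_pos h2]
    exact Finset.coe_mem _
  have hF_E2 : ∀ x, ¬(∃ i, u i = x) → x ∉ s → F x ∈ tᶜ := by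
    intro x h1 h2
    simp only [hF, dif_neg h1, dif_neg h2]
    exact Finset.coe_mem _
  have hFinj : Function.Injective F := by
    intro x y hxy
    by_cases h1x : ∃ i, u i = x <;> by_cases h1y : ∃ i, u i = y
    · obtain ⟨i, rfl⟩ := h1x; obtain ⟨j, rfl⟩ := h1y
      rw [hFu, hFu] at hxy
      exact congrArg u (hv hxy)
    · exfalso
      by_cases h2y : y ∈ s
      · have := hF_D2 y h2y h1y
        rw [← hxy] at this
        exact (Finset.mem_sdiff.1 this).2 (hF_A2 x h1x)
      · have := hF_E2 y h1y h2y
        rw [← hxy] at this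
        exact (Finset.mem_compl.1 this) (hA2t (hF_A2 x h1x))
    · exfalso
      by_cases h2x : x ∈ s
      · have := hF_D2 x h2x h1x
        rw [hxy] at this
        exact (Finset.mem_sdiff.1 this).2 (hF_A2 y h1y)
      · have := hF_E2 x h1x h2x
        rw [hxy] at this
        exact (Finset.mem_compl.1 this) (hA2t (hF_A2 y h1y))
    · by_cases h2x : x ∈ s <;> by_cases h2y : y ∈ s
      · have ex : F x = ((d ⟨x, Finset.mem_sdiff.2 ⟨h2x, fun hm => h1x ((memA1 x).1 hm)⟩⟩ : (t \ A2 : Finset α)) : α) := by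
          simp only [hF, dif_neg h1x, dif_pos h2x]
        have ey : F y = ((d ⟨y, Finset.mem_sdiff.2 ⟨h2y, fun hm => h1y ((memA1 y).1 hm)⟩⟩ : (t \ A2 : Finset α)) : α) := by
          simp only [hF, dif_neg h1y, dif_pos h2y]
        rw [ex, ey] at hxy
        have := d.injective (Subtype.ext hxy)
        exact congrArg Subtype.val this
      · exfalso
        have hx' := hF_D2 x h2x h1x
        have hy' := hF_E2 y h1y h2y
        rw [hxy] at hx'
        exact (Finset.mem_compl.1 hy') (Finset.mem_sdiff.1 hx').1
      · exfalso
        have hx' := hF_E2 x h1x h2x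
        have hy' := hF_D2 y h2y h1y
        rw [← hxy] at hy'
        exact (Finset.mem_compl.1 hx') (Finset.mem_sdiff.1 hy').1
      · have ex : F x = ((cpl ⟨x, Finset.mem_compl.2 h2x⟩ : (tᶜ : Finset α)) : α) := by
          simp only [hF, dif_neg h1x, dif_neg h2x]
        have ey : F y = ((cpl ⟨y, Finset.mem_compl.2 h2y⟩ : (tᶜ : Finset α)) : α) := by
          simp only [hF, dif_neg h1y, dif_neg h2y]
        rw [ex, ey] at hxy
        have := cpl.injective (Subtype.ext hxy)
        exact congrArg Subtype.val this
  have hFbij : Function.Bijective F := (Finite.injective_iff_bijective).1 hFinj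
  refine ⟨Equiv.ofBijective F hFbij, fun i => hFu i, ?_⟩
  have hsub : s.image (Equiv.ofBijective F hFbij) ⊆ t := by
    intro y hy
    simp only [Finset.mem_image] at hy
    obtain ⟨x, hx, rfl⟩ := hy
    show F x ∈ t
    by_cases h1 : ∃ i, u i = x
    · exact hA2t (hF_A2 x h1)
    · exact (Finset.mem_sdiff.1 (hF_D2 x hx h1)).1
  apply Finset.eq_of_subset_of_card_le hsub
  rw [Finset.card_image_of_injective _ (Equiv.injective _), hst]

set_option maxHeartbeats 1600000

theorem stmt19 {X : Type*} [Fintype X] [DecidableEq X] (k : ℕ)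
    (hk1 : 1 ≤ k) (hk2 : k < Fintype.card X)
    (C : Set (Finset X → X)) (hne : C.Nonempty)
    (hch : ∀ c ∈ C, IsChoice k c) (hsym : SymFam C)
    (r : ℕ) (hr4 : 4 ≤ r) (hrk : r ≤ k)
    (hmon : ∀ s : ℕ, 2 ≤ s → s < r → ∀ g : Finset X → (Fin s → X) → X,
      IsAvg k s C g → AvgMonarchy k s g)
    (hex : ∃ f : Finset X → (Fin r → X) → X, IsAvg k r C f ∧ ¬ AvgMonarchy k r f) :
    ∀ Y : Finset X, Y.card = k → ∀ a : Fin r → X, (∀ i, a i ∈ Y) →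
      Function.Injective a →
      ∃ f : Finset X → (Fin r → X) → X, IsAvg k r C f ∧
        f Y a = a ⟨1, by omega⟩ ∧
        ∀ Z : Finset X, Z.card = k → ∀ b : Fin r → X, (∀ i, b i ∈ Z) →
          ¬ Function.Injective b → f Z b = b ⟨0, by omega⟩ := by
  classical
  obtain ⟨f, hf_avg, hf_nonmon⟩ := hex
  obtain ⟨r', rfl⟩ : ∃ n, r = n + 1 := ⟨r - 1, by omega⟩
  have hr'3 : 3 ≤ r' := by omega
  -- Part P: pair monarchy
  have P : ∀ i j : Fin (r' + 1), i ≠ j → ∃ m, m ≠ j ∧ ∀ Z : Finset X, Z.card = k →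
      ∀ x : Fin (r' + 1) → X, (∀ t, x t ∈ Z) → x i = x j → f Z x = x m := by
    intro i j hij
    obtain ⟨i₀, hi₀⟩ : ∃ z, j.succAbove z = i := Fin.exists_succAbove_eq hij
    set d : Fin (r' + 1) → Fin r' := fun t =>
      if h : t = j then i₀ else Classical.choose (Fin.exists_succAbove_eq h) with hd
    have hde : ∀ (t : Fin (r' + 1)) (h : t ≠ j), j.succAbove (d t) = t := by
      intro t h
      simp only [hd, dif_neg h]
      exact Classical.choose_spec (Fin.exists_succAbove_eq h)
    have hdj : j.succAbove (d j) = i := by simp only [hd, dif_pos rfl]; exact hi₀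
    set g : Finset X → (Fin r' → X) → X := fun Z y => f Z (fun t => y (d t)) with hg
    have hgavg : IsAvg k r' C g := by
      constructor
      · intro Z hZ y hy
        obtain ⟨t, ht⟩ := hf_avg.1 Z hZ (fun t => y (d t)) (fun t => hy (d t))
        exact ⟨d t, ht⟩
      · intro c hc
        exact hf_avg.2 (fun t => c (d t)) (fun t => hc (d t))
    obtain ⟨t₀, ht₀⟩ := hmon r' (by omega) (by omega) g hgavg
    refine ⟨j.succAbove t₀, Fin.succAbove_ne j t₀, ?_⟩
    intro Z hZ x hx hxij
    have hxe : (fun t => x (j.succAbove (d t))) = x := by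
      funext t
      by_cases h : t = j
      · subst h; rw [hdj, hxij]
      · rw [hde t h]
    have := ht₀ Z hZ (fun s => x (j.succAbove s)) (fun s => hx _)
    calc f Z x = g Z (fun s => x (j.succAbove s)) := by rw [hg]; simp only []; rw [hxe]
    _ = x (j.succAbove t₀) := this
  -- test set and injective tuple
  obtain ⟨Z₀, -, hZ₀⟩ := Finset.exists_subset_card_eq (s := (Finset.univ : Finset X)) (n := k)
    (by rw [Finset.card_univ]; omega)
  obtain ⟨ze, hze⟩ : ∃ ze : Fin (r' + 1) ↪ X, Set.range ze ⊆ ↑Z₀ :=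
    Function.Embedding.exists_of_card_le_finset (by rw [Fintype.card_fin]; omega)
  set z : Fin (r' + 1) → X := fun t => ze t with hzdef
  have hzinj : Function.Injective z := ze.injective
  have hzmem : ∀ t, z t ∈ Z₀ := fun t => hze ⟨t, rfl⟩
  -- TEST: compare two pair-monarchs along a collapse map σ
  have TEST : ∀ (i j u v mA mB : Fin (r' + 1)),
      (∀ Z : Finset X, Z.card = k → ∀ x : Fin (r' + 1) → X, (∀ t, x t ∈ Z) →
        x i = x j → f Z x = x mA) →
      (∀ Z : Finset X, Z.card = k → ∀ x : Fin (r' + 1) → X, (∀ t, x t ∈ Z) →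
        x u = x v → f Z x = x mB) →
      ∀ σ : Fin (r' + 1) → Fin (r' + 1), σ i = σ j → σ u = σ v → σ mA = σ mB := by
    intro i j u v mA mB hA hB σ h1 h2
    have e1 := hA Z₀ hZ₀ (fun t => z (σ t)) (fun t => hzmem _) (by beta_reduce; rw [h1])
    have e2 := hB Z₀ hZ₀ (fun t => z (σ t)) (fun t => hzmem _) (by beta_reduce; rw [h2])
    beta_reduce at e1 e2
    exact hzinj (e1.symm.trans e2)

  -- CLAIM: a single external pair monarch propagates to all non-injective tuples
  have CLAIM : ∀ i j m₀ : Fin (r' + 1), i ≠ j → m₀ ≠ i → m₀ ≠ j →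
      (∀ Z : Finset X, Z.card = k → ∀ x : Fin (r' + 1) → X, (∀ t, x t ∈ Z) →
        x i = x j → f Z x = x m₀) →
      ∀ Z : Finset X, Z.card = k → ∀ x : Fin (r' + 1) → X, (∀ t, x t ∈ Z) →
        ¬ Function.Injective x → f Z x = x m₀ := by
    intro i j m₀ hij hmi hmj hspec0
    have hw3 : ∀ p q s : Fin (r' + 1), ∃ w, w ≠ p ∧ w ≠ q ∧ w ≠ s := by
      intro p q s
      have h1 := Finset.card_insert_le p ({q, s} : Finset (Fin (r' + 1)))
      have h2 := Finset.card_insert_le q ({s} : Finset (Fin (r' + 1)))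
      have h3 : ({s} : Finset (Fin (r' + 1))).card = 1 := Finset.card_singleton s
      have hns : ¬ (Finset.univ ⊆ ({p, q, s} : Finset (Fin (r' + 1)))) := by
        intro hsub
        have hc := Finset.card_le_card hsub
        rw [Finset.card_univ, Fintype.card_fin] at hc
        omega
      obtain ⟨w, -, hw⟩ := Finset.not_subset.1 hns
      simp only [Finset.mem_insert, Finset.mem_singleton, not_or] at hw
      exact ⟨w, hw.1, hw.2.1, hw.2.2⟩
    have hspec0' : ∀ Z : Finset X, Z.card = k → ∀ x : Fin (r' + 1) → X, (∀ t, x t ∈ Z) →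
        x j = x i → f Z x = x m₀ := fun Z hZ x hx h => hspec0 Z hZ x hx h.symm
    -- OV : overlap case
    have OV : ∀ s s' t'' : Fin (r' + 1), s ≠ s' → s ≠ t'' → s' ≠ t'' →
        m₀ ≠ s → m₀ ≠ s' →
        (∀ Z : Finset X, Z.card = k → ∀ x : Fin (r' + 1) → X, (∀ t, x t ∈ Z) →
          x s = x s' → f Z x = x m₀) →
        ∀ M', (∀ Z : Finset X, Z.card = k → ∀ x : Fin (r' + 1) → X, (∀ t, x t ∈ Z) →
          x s = x t'' → f Z x = x M') →
        ∀ (x : Fin (r' + 1) → X), x s = x t'' → x M' = x m₀ := by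
      intro s s' t'' hss' hst hs't hm0s hm0s' hsp0 M' hspM
      by_cases hm0t : m₀ = t''
      · subst hm0t
        have hTT := TEST s s' s m₀ m₀ M' hsp0 hspM
          (fun t => if t = s' ∨ t = m₀ ∨ t = s then s else t)
          (by simp) (by simp)
        beta_reduce at hTT
        rw [if_pos (by tauto)] at hTT
        by_cases hM's' : M' = s'
        · exfalso
          obtain ⟨w, hws, hws', hwm⟩ := hw3 s s' m₀
          obtain ⟨N, -, hNspec⟩ := P s' w (Ne.symm hws')
          have hT2 := TEST s s' s' w m₀ N hsp0 hNspec
            (fun t => if t = s' ∨ t = w ∨ t = s then s else t)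
            (by simp) (by simp)
          beta_reduce at hT2
          rw [if_neg (by push_neg; exact ⟨hm0s', Ne.symm hwm, hm0s⟩)] at hT2
          have hN : N = m₀ := by
            by_cases hNin : N = s' ∨ N = w ∨ N = s
            · rw [if_pos hNin] at hT2; exact absurd hT2 hm0s
            · rw [if_neg hNin] at hT2; exact hT2.symm
          have hT3 := TEST s m₀ s' w M' N hspM hNspec
            (fun t => if t = m₀ then s else if t = w then s' else t)
            (by simp [hst, Ne.symm hws]) (by simp [hs't, Ne.symm hws', hwm])
          beta_reduce at hT3
          rw [hM's', hN] at hT3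
          simp only [if_neg hs't, if_neg (Ne.symm hws'), if_pos rfl] at hT3
          exact hss' hT3.symm
        · intro x hx
          by_cases hM'in : M' = s' ∨ M' = m₀ ∨ M' = s
          · rcases hM'in with h | h | h
            · exact absurd h hM's'
            · rw [h]
            · rw [h, hx]
          · rw [if_neg hM'in] at hTT
            rw [← hTT, hx]
      · have hTT := TEST s s' s t'' m₀ M' hsp0 hspM
          (fun t => if t = s' ∨ t = t'' ∨ t = s then s else t)
          (by simp) (by simp)
        beta_reduce at hTT
        rw [if_neg (by push_neg; exact ⟨hm0s', hm0t, hm0s⟩)] at hTT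
        have hM : M' = m₀ := by
          by_cases hM'in : M' = s' ∨ M' = t'' ∨ M' = s
          · rw [if_pos hM'in] at hTT; exact absurd hTT hm0s
          · rw [if_neg hM'in] at hTT; exact hTT.symm
        intro x hx
        rw [hM]
    -- main body of CLAIM
    intro Z hZ x hx hxni
    obtain ⟨u, v, hxuv, huv⟩ := Function.not_injective_iff.1 hxni
    obtain ⟨M, hMv, hMspec⟩ := P u v huv
    rw [hMspec Z hZ x hx hxuv]
    by_cases hui : u = i
    · by_cases hvj : v = j
      · have hsp : ∀ Z : Finset X, Z.card = k → ∀ y : Fin (r' + 1) → X, (∀ t, y t ∈ Z) →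
            y i = y j → f Z y = y M :=
          fun Z hZ y hy h => hMspec Z hZ y hy (by rw [hui, hvj]; exact h)
        have hTT := TEST i j i j m₀ M hspec0 hsp (fun t => if t = j then i else t)
          (by simp [hij]) (by simp [hij])
        beta_reduce at hTT
        rw [if_neg hmj, if_neg (hvj ▸ hMv)] at hTT
        rw [← hTT]
      · exact OV i j v hij (fun h => huv (by rw [hui]; exact h)) (fun h => hvj h.symm)
          hmi hmj hspec0 M
          (fun Z hZ y hy h => hMspec Z hZ y hy (by rw [hui]; exact h)) x
          (by rw [← hui]; exact hxuv)
    · by_cases huj : u = j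
      · by_cases hvi : v = i
        · have hsp : ∀ Z : Finset X, Z.card = k → ∀ y : Fin (r' + 1) → X, (∀ t, y t ∈ Z) →
              y j = y i → f Z y = y M :=
            fun Z hZ y hy h => hMspec Z hZ y hy (by rw [huj, hvi]; exact h)
          have hTT := TEST i j j i m₀ M hspec0 hsp (fun t => if t = j then i else t)
            (by simp [hij]) (by simp [hij])
          beta_reduce at hTT
          rw [if_neg hmj] at hTT
          by_cases hMj : M = j
          · rw [if_pos hMj] at hTT; exact absurd hTT hmi
          · rw [if_neg hMj] at hTT; rw [← hTT]
        · exact OV j i v (fun h => hij h.symm) (fun h => huv (by rw [huj]; exact h))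
            (fun h => hvi h.symm) hmj hmi hspec0' M
            (fun Z hZ y hy h => hMspec Z hZ y hy (by rw [huj]; exact h)) x
            (by rw [← huj]; exact hxuv)
      · by_cases hvi : v = i
        · exact OV i j u hij (fun h => hui h.symm) (fun h => huj h.symm) hmi hmj hspec0 M
            (fun Z hZ y hy h => hMspec Z hZ y hy (by rw [hvi]; exact h.symm)) x
            (by rw [hvi] at hxuv; exact hxuv.symm)
        · by_cases hvj : v = j
          · exact OV j i u (fun h => hij h.symm) (fun h => huj h.symm) (fun h => hui h.symm)
              hmj hmi hspec0' M
              (fun Z hZ y hy h => hMspec Z hZ y hy (by rw [hvj]; exact h.symm)) x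
              (by rw [hvj] at hxuv; exact hxuv.symm)
          · have hTT := TEST i j u v m₀ M hspec0 hMspec
              (fun t => if t = j then i else if t = v then u else t)
              (by simp [hij, Ne.symm hvi]) (by simp [huj, huv, hvj])
            beta_reduce at hTT
            rw [if_neg hmj] at hTT
            by_cases hMj : M = j
            · exfalso
              rw [if_pos hMj] at hTT
              by_cases hm0v : m₀ = v
              · rw [if_pos hm0v] at hTT; exact hui hTT
              · rw [if_neg hm0v] at hTT; exact hmi hTT
            · rw [if_neg hMj, if_neg hMv] at hTT
              by_cases hm0v : m₀ = v
              · rw [if_pos hm0v] at hTT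
                rw [← hTT, hxuv, hm0v]
              · rw [if_neg hm0v] at hTT
                rw [← hTT]
  -- KEY: a uniform monarch on all non-injective tuples
  have KEY : ∃ m₀ : Fin (r' + 1), ∀ Z : Finset X, Z.card = k →
      ∀ x : Fin (r' + 1) → X, (∀ t, x t ∈ Z) → ¬ Function.Injective x → f Z x = x m₀ := by
    have h01 : (⟨0, by omega⟩ : Fin (r' + 1)) ≠ ⟨1, by omega⟩ := by simp [Fin.ext_iff]
    have h23 : (⟨2, by omega⟩ : Fin (r' + 1)) ≠ ⟨3, by omega⟩ := by simp [Fin.ext_iff]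
    obtain ⟨m01, hm01ne, hm01⟩ := P ⟨0, by omega⟩ ⟨1, by omega⟩ h01
    obtain ⟨m23, hm23ne, hm23⟩ := P ⟨2, by omega⟩ ⟨3, by omega⟩ h23
    by_cases h1 : m01 = ⟨0, by omega⟩
    · have hTT := TEST ⟨0, by omega⟩ ⟨1, by omega⟩ ⟨2, by omega⟩ ⟨3, by omega⟩ m01 m23 hm01 hm23
        (fun t => if t = (⟨1, by omega⟩ : Fin (r' + 1)) then ⟨0, by omega⟩
          else if t = (⟨3, by omega⟩ : Fin (r' + 1)) then ⟨2, by omega⟩ else t)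
        (by simp [Fin.ext_iff]) (by simp [Fin.ext_iff])
      beta_reduce at hTT
      rw [h1] at hTT
      rw [if_neg (by simp [Fin.ext_iff]), if_neg (by simp [Fin.ext_iff])] at hTT
      have hm23ne2 : m23 ≠ ⟨2, by omega⟩ := by
        intro h
        rw [h] at hTT
        rw [if_neg (by simp [Fin.ext_iff]), if_neg (by simp [Fin.ext_iff])] at hTT
        simp [Fin.ext_iff] at hTT
      exact ⟨m23, CLAIM _ _ _ h23 hm23ne2 hm23ne hm23⟩
    · exact ⟨m01, CLAIM _ _ _ h01 h1 hm01ne hm01⟩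
  obtain ⟨m₀, hm₀⟩ := KEY
  intro Y hY a ha hainj
  -- witness of non-monarchy at m₀
  rw [AvgMonarchy] at hf_nonmon
  push_neg at hf_nonmon
  obtain ⟨Y₁, hY₁, x₁, hx₁mem, hx₁ne⟩ := hf_nonmon m₀
  have hx₁inj : Function.Injective x₁ := by
    by_contra h
    exact hx₁ne (hm₀ Y₁ hY₁ x₁ hx₁mem h)
  obtain ⟨n₀, hn₀⟩ := hf_avg.1 Y₁ hY₁ x₁ hx₁mem
  have hn₀m₀ : n₀ ≠ m₀ := by rintro rfl; exact hx₁ne hn₀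
  -- coordinate permutation ρ with ρ 0 = m₀, ρ 1 = n₀
  set c0 : Fin (r' + 1) := ⟨0, by omega⟩ with hc0
  set c1 : Fin (r' + 1) := ⟨1, by omega⟩ with hc1
  have hc01 : c0 ≠ c1 := by simp [hc0, hc1, Fin.ext_iff]
  set s1 : Equiv.Perm (Fin (r' + 1)) := Equiv.swap c0 m₀ with hs1
  set n₁ : Fin (r' + 1) := s1.symm n₀ with hn₁
  have hn₁0 : n₁ ≠ c0 := by
    intro h
    apply hn₀m₀
    have h2 : s1 n₁ = s1 c0 := by rw [h]
    rw [hn₁, Equiv.apply_symm_apply] at h2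
    rw [h2, hs1, Equiv.swap_apply_left]
  set ρ : Equiv.Perm (Fin (r' + 1)) := (Equiv.swap c1 n₁).trans s1 with hρ
  have hρ0 : ρ c0 = m₀ := by
    rw [hρ]
    simp only [Equiv.trans_apply]
    rw [Equiv.swap_apply_of_ne_of_ne hc01 hn₁0.symm, hs1, Equiv.swap_apply_left]
  have hρ1 : ρ c1 = n₀ := by
    rw [hρ]
    simp only [Equiv.trans_apply]
    rw [Equiv.swap_apply_left, hn₁, Equiv.apply_symm_apply]
  -- the permutation π of X
  obtain ⟨π, hπa, hπY⟩ := exists_perm_extend19 Y₁ Y (by rw [hY₁, hY])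
    (fun t => x₁ (ρ t)) a (hx₁inj.comp ρ.injective) hainj (fun t => hx₁mem _) ha
  have hπsymm : ∀ t, π.symm (a t) = x₁ (ρ t) := by
    intro t
    rw [← hπa t, Equiv.symm_apply_apply]
  have hcancel : ∀ Z : Finset X, (Z.image (π.symm : X → X)).image (π : X → X) = Z := by
    intro Z
    rw [Finset.image_image]
    have hco : (π : X → X) ∘ (π.symm : X → X) = id := funext fun y => Equiv.apply_symm_apply π y
    rw [hco, Finset.image_id]
  have hYpre : Y.image (π.symm : X → X) = Y₁ := by
    rw [← hπY, Finset.image_image]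
    have hco : (π.symm : X → X) ∘ (π : X → X) = id := funext fun y => Equiv.symm_apply_apply π y
    rw [hco, Finset.image_id]
  have hcard' : ∀ Z : Finset X, Z.card = k → (Z.image (π.symm : X → X)).card = k := by
    intro Z hZ
    rw [Finset.card_image_of_injective _ (Equiv.injective _), hZ]
  refine ⟨fun Z x => π (f (Z.image (π.symm : X → X)) (fun t => π.symm (x (ρ.symm t)))), ⟨?_, ?_⟩, ?_, ?_⟩
  · -- IsAvg first condition
    intro Z hZ x hxm
    obtain ⟨t, ht⟩ := hf_avg.1 (Z.image (π.symm : X → X)) (hcard' Z hZ)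
      (fun t => π.symm (x (ρ.symm t))) (fun t => Finset.mem_image_of_mem _ (hxm _))
    refine ⟨ρ.symm t, ?_⟩
    simp only []
    rw [ht, Equiv.apply_symm_apply]
  · -- IsAvg second condition
    intro c hc
    have hd : ∀ t : Fin (r' + 1),
        (fun W : Finset X => π.symm (c (ρ.symm t) (W.image (π : X → X)))) ∈ C :=
      fun t => hsym π (c (ρ.symm t)) (hc _)
    have he := hf_avg.2 (fun t W => π.symm (c (ρ.symm t) (W.image (π : X → X)))) hd
    have hkey : (fun Z : Finset X =>
        π (f (Z.image (π.symm : X → X)) (fun t => π.symm (c (ρ.symm t) Z)))) =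
        (fun Z : Finset X => π.symm.symm
          ((fun W => f W (fun t => π.symm (c (ρ.symm t) (W.image (π : X → X)))))
            (Z.image (π.symm : X → X)))) := by
      funext Z
      simp only [Equiv.symm_symm]
      rw [hcancel Z]
    show (fun Z : Finset X =>
        π (f (Z.image (π.symm : X → X)) (fun t => π.symm (c (ρ.symm t) Z)))) ∈ C
    rw [hkey]
    exact hsym π.symm _ he
  · -- value at (Y, a)
    show π (f (Y.image (π.symm : X → X)) (fun t => π.symm (a (ρ.symm t)))) = a ⟨1, by omega⟩
    have h1 : (fun t => π.symm (a (ρ.symm t))) = x₁ := by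
      funext t
      rw [hπsymm, Equiv.apply_symm_apply]
    rw [hYpre, h1, hn₀, ← hρ1, hπa]
  · -- non-injective tuples
    intro Z hZ b hb hbni
    show π (f (Z.image (π.symm : X → X)) (fun t => π.symm (b (ρ.symm t)))) = b ⟨0, by omega⟩
    have hyni : ¬ Function.Injective (fun t => π.symm (b (ρ.symm t))) := by
      intro hinj
      apply hbni
      intro p q hpq
      have h1 : π.symm (b (ρ.symm (ρ p))) = π.symm (b (ρ.symm (ρ q))) := by
        rw [Equiv.symm_apply_apply, Equiv.symm_apply_apply, hpq]
      have := hinj h1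
      exact ρ.injective this
    rw [hm₀ _ (hcard' Z hZ) _ (fun t => Finset.mem_image_of_mem _ (hb _)) hyni]
    rw [Equiv.apply_symm_apply]
    congr 1
    rw [← hρ0, Equiv.symm_apply_apply]
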